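/- arXiv:1509.06668 — 6 statements merged into one kernel-verified Lean document; each statement's English description precedes it below -/
import Mathlib

section
/- Let (Ω, 𝒜, μ) be a probability space, let g, g̃ : Ω → ℝ be measurable, and let γ ≥ 0. Then the hybrid failure-probability estimate P_f^h = P_γ + Q_γ satisfies the exact error identity P_f^h − P_f = μ({g̃ < −γ} ∩ {g ≥ 0}) − μ({g < 0} ∩ {g̃ > γ}). -/
open MeasureTheory

/-- exact error identity for the hybrid failure-probability estimate
`P_f^h = P_γ + Q_γ`:
`P_f^h − P_f = μ({g̃ < −γ} ∩ {g ≥ 0}) − μ({g < 0} ∩ {g̃ > γ})`. -/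
theorem hybrid_error_identity
    {Ω : Type*} [MeasurableSpace Ω] (μ : Measure Ω) [IsProbabilityMeasure μ]
    (g gt : Ω → ℝ) (hg : Measurable g) (hgt : Measurable gt)
    (γ : ℝ) (hγ : 0 ≤ γ) :
    ((μ {ω | gt ω < -γ}).toReal + (μ {ω | |gt ω| ≤ γ ∧ g ω < 0}).toReal)
      - (μ {ω | g ω < 0}).toReal
    = (μ ({ω | gt ω < -γ} ∩ {ω | 0 ≤ g ω})).toReal
      - (μ ({ω | g ω < 0} ∩ {ω | γ < gt ω})).toReal := by
  set A : Set Ω := {ω | gt ω < -γ} with hAdef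
  set B : Set Ω := {ω | |gt ω| ≤ γ} with hBdef
  set C : Set Ω := {ω | g ω < 0} with hCdef
  set T : Set Ω := {ω | γ < gt ω} with hTdef
  have hA : MeasurableSet A := hgt measurableSet_Iio
  have hB : MeasurableSet B := hgt.abs measurableSet_Iic
  have hC : MeasurableSet C := hg measurableSet_Iio
  have e3 : (C \ A) ∩ B = {ω | |gt ω| ≤ γ ∧ g ω < 0} := by
    ext ω
    simp only [hAdef, hBdef, hCdef, Set.mem_inter_iff, Set.mem_diff, Set.mem_setOf_eq]
    constructor
    · rintro ⟨⟨h1, _⟩, h2⟩; exact ⟨h2, h1⟩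
    · rintro ⟨h1, h2⟩
      have := abs_le.mp h1
      exact ⟨⟨h2, by linarith [this.1]⟩, h1⟩
  have e4 : (C \ A) \ B = C ∩ T := by
    ext ω
    simp only [hAdef, hBdef, hCdef, hTdef, Set.mem_inter_iff, Set.mem_diff,
      Set.mem_setOf_eq, not_lt, not_le, abs_le, not_and_or]
    constructor
    · rintro ⟨⟨h1, h2⟩, h3⟩
      rcases h3 with h | h
      · exact absurd h (not_lt.mpr h2)
      · exact ⟨h1, h⟩
    · rintro ⟨h1, h2⟩
      exact ⟨⟨h1, by linarith⟩, Or.inr h2⟩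
  have e5 : A \ C = A ∩ {ω | 0 ≤ g ω} := by
    ext ω
    simp [hAdef, hCdef, Set.mem_diff, not_lt]
  have h1 : μ (C ∩ A) + μ (C \ A) = μ C := measure_inter_add_diff C hA
  have h2 : μ ((C \ A) ∩ B) + μ ((C \ A) \ B) = μ (C \ A) := measure_inter_add_diff _ hB
  have h3 : μ (A ∩ C) + μ (A \ C) = μ A := measure_inter_add_diff A hC
  rw [e3, e4] at h2
  rw [e5] at h3
  have hAC : A ∩ C = C ∩ A := Set.inter_comm _ _
  rw [hAC] at h3
  -- pass to toReal
  have fin : ∀ s : Set Ω, μ s ≠ ⊤ := fun s => measure_ne_top μ s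
  have t1 : (μ C).toReal = (μ (C ∩ A)).toReal + (μ (C \ A)).toReal := by
    rw [← ENNReal.toReal_add (fin _) (fin _), h1]
  have t2 : (μ (C \ A)).toReal
      = (μ {ω | |gt ω| ≤ γ ∧ g ω < 0}).toReal + (μ (C ∩ T)).toReal := by
    rw [← ENNReal.toReal_add (fin _) (fin _), h2]
  have t3 : (μ A).toReal = (μ (C ∩ A)).toReal + (μ (A ∩ {ω | 0 ≤ g ω})).toReal := by
    rw [← ENNReal.toReal_add (fin _) (fin _), h3]
  linarith
end

section
/- Let (Ω, 𝒜, μ) be a probability space, let g, g̃ : Ω → ℝ be measurable, and let γ ≥ 0. Then the hybrid estimate P_f^h = P_γ + Q_γ satisfies |P_f^h − P_f| ≤ μ({ω : |g(ω) − g̃(ω)| > γ}). -/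
open MeasureTheory

/-- the hybrid estimate `P_f^h = P_γ + Q_γ` satisfies
`|P_f^h − P_f| ≤ μ({ω : |g(ω) − g̃(ω)| > γ})`. -/
theorem hybrid_error_bound
    {Ω : Type*} [MeasurableSpace Ω] (μ : Measure Ω) [IsProbabilityMeasure μ]
    (g gt : Ω → ℝ) (hg : Measurable g) (hgt : Measurable gt)
    (γ : ℝ) (hγ : 0 ≤ γ) :
    |((μ {ω | gt ω < -γ}).toReal + (μ {ω | |gt ω| ≤ γ ∧ g ω < 0}).toReal)
        - (μ {ω | g ω < 0}).toReal|
      ≤ (μ {ω | γ < |g ω - gt ω|}).toReal := by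
  set A := {ω | gt ω < -γ} with hAdef
  set B := {ω | |gt ω| ≤ γ ∧ g ω < 0} with hBdef
  set F := {ω | g ω < 0} with hFdef
  set E := {ω | γ < |g ω - gt ω|} with hEdef
  have hBmeas : MeasurableSet B :=
    ((measurableSet_le hgt.abs measurable_const).inter
      (measurableSet_lt hg measurable_const))
  have hdisj : Disjoint A B := by
    rw [Set.disjoint_left]
    rintro ω hωA ⟨h1, _⟩
    have := abs_le.mp h1
    simp only [hAdef, Set.mem_setOf_eq] at hωA
    linarith [this.1]
  have hU : μ (A ∪ B) = μ A + μ B := measure_union hdisj hBmeas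
  have h1 : A ∪ B ⊆ F ∪ E := by
    rintro ω (hω | hω)
    · simp only [hAdef, Set.mem_setOf_eq] at hω
      by_cases hgω : g ω < 0
      · exact Or.inl hgω
      · right
        simp only [hEdef, Set.mem_setOf_eq]
        push_neg at hgω
        rw [abs_sub_comm, abs_of_nonpos (by linarith)]
        linarith
    · exact Or.inl hω.2
  have h2 : F ⊆ (A ∪ B) ∪ E := by
    intro ω hω
    simp only [hFdef, Set.mem_setOf_eq] at hω
    by_cases hA : gt ω < -γ
    · exact Or.inl (Or.inl hA)
    · push_neg at hA
      by_cases hB : gt ω ≤ γ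
      · exact Or.inl (Or.inr ⟨abs_le.mpr ⟨by linarith, hB⟩, hω⟩)
      · push_neg at hB
        right
        simp only [hEdef, Set.mem_setOf_eq]
        rw [abs_of_nonpos (by linarith)]
        linarith
  have m1 : μ (A ∪ B) ≤ μ F + μ E := (measure_mono h1).trans (measure_union_le _ _)
  have m2 : μ F ≤ μ (A ∪ B) + μ E := (measure_mono h2).trans (measure_union_le _ _)
  have hsum : (μ A).toReal + (μ B).toReal = (μ (A ∪ B)).toReal := by
    rw [hU, ENNReal.toReal_add (measure_ne_top μ A) (measure_ne_top μ B)]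
  have r1 : (μ (A ∪ B)).toReal ≤ (μ F).toReal + (μ E).toReal := by
    rw [← ENNReal.toReal_add (measure_ne_top μ F) (measure_ne_top μ E)]
    exact ENNReal.toReal_mono (by finiteness) m1
  have r2 : (μ F).toReal ≤ (μ (A ∪ B)).toReal + (μ E).toReal := by
    rw [← ENNReal.toReal_add (measure_ne_top μ (A ∪ B)) (measure_ne_top μ E)]
    exact ENNReal.toReal_mono (by finiteness) m2
  rw [abs_le]
  constructor <;> linarith
end

section
/- Let (Ω, 𝒜, μ) be a probability space, let g, g̃ : Ω → ℝ be measurable with g − g̃ in L^p(μ) for some real p ≥ 1, and set ε_p = (∫ |g − g̃|^p dμ)^{1/p}. Let ε > 0 and let γ > 0 satisfy γ ≥ ε_p / ε^{1/p}. Then the hybrid estimate satisfies |P_f^h − P_f| ≤ ε. -/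
open MeasureTheory

/-- if `g − g̃ ∈ L^p(μ)` with `ε_p = (∫ |g − g̃|^p dμ)^{1/p}`,
`ε > 0` and `γ > 0` satisfies `γ ≥ ε_p / ε^{1/p}`, then the hybrid estimate
satisfies `|P_f^h − P_f| ≤ ε`. -/
theorem hybrid_error_bound_Lp
    {Ω : Type*} [MeasurableSpace Ω] (μ : Measure Ω) [IsProbabilityMeasure μ]
    (g gt : Ω → ℝ) (hg : Measurable g) (hgt : Measurable gt)
    (p : ℝ) (hp : 1 ≤ p)
    (hLp : Integrable (fun ω => |g ω - gt ω| ^ p) μ)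
    (ε : ℝ) (hε : 0 < ε)
    (γ : ℝ) (hγpos : 0 < γ)
    (hγ : (∫ ω, |g ω - gt ω| ^ p ∂μ) ^ (1 / p) / ε ^ (1 / p) ≤ γ) :
    |((μ {ω | gt ω < -γ}).toReal + (μ {ω | |gt ω| ≤ γ ∧ g ω < 0}).toReal)
        - (μ {ω | g ω < 0}).toReal| ≤ ε := by
  have hppos : 0 < p := lt_of_lt_of_le one_pos hp
  set f : Ω → ℝ := fun ω => |g ω - gt ω| ^ p with hf
  have hfnonneg : ∀ ω, 0 ≤ f ω := fun ω => Real.rpow_nonneg (abs_nonneg _) p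
  have hInt_nonneg : 0 ≤ ∫ ω, f ω ∂μ := integral_nonneg hfnonneg
  set D : Set Ω := {ω | γ ^ p ≤ f ω} with hD
  -- integral bound: ∫ f ≤ ε * γ^p
  have hIb : ∫ ω, f ω ∂μ ≤ ε * γ ^ p := by
    have h1 : ((∫ ω, f ω ∂μ) / ε) ^ (1 / p) ≤ γ := by
      rw [Real.div_rpow hInt_nonneg hε.le]
      exact hγ
    have h2 : (((∫ ω, f ω ∂μ) / ε) ^ (1 / p)) ^ p ≤ γ ^ p :=
      Real.rpow_le_rpow (Real.rpow_nonneg (by positivity) _) h1 hppos.le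
    rw [← Real.rpow_mul (by positivity), one_div, inv_mul_cancel₀ hppos.ne',
      Real.rpow_one, div_le_iff₀ hε] at h2
    linarith
  -- Markov
  have hMarkov : γ ^ p * (μ D).toReal ≤ ∫ ω, f ω ∂μ :=
    mul_meas_ge_le_integral_of_nonneg (Filter.Eventually.of_forall hfnonneg) hLp _
  have hγp : 0 < γ ^ p := Real.rpow_pos_of_pos hγpos p
  have hDε : (μ D).toReal ≤ ε := by
    rw [← mul_le_mul_iff_right₀ hγp]
    calc γ ^ p * (μ D).toReal ≤ ∫ ω, f ω ∂μ := hMarkov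
      _ ≤ ε * γ ^ p := hIb
      _ = γ ^ p * ε := mul_comm _ _
  -- set inclusions
  set S1 : Set Ω := {ω | gt ω < -γ} with hS1
  set S2 : Set Ω := {ω | |gt ω| ≤ γ ∧ g ω < 0} with hS2
  set F : Set Ω := {ω | g ω < 0} with hF
  have habs : ∀ ω : Ω, γ ≤ |g ω - gt ω| → ω ∈ D := fun ω h =>
    Real.rpow_le_rpow hγpos.le h hppos.le
  have hsub1 : S1 ∪ S2 ⊆ F ∪ D := by
    rintro ω (h | h)
    · by_cases hgω : g ω < 0
      · exact Or.inl hgω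
      · refine Or.inr (habs ω ?_)
        push_neg at hgω
        have h' : gt ω < -γ := h
        rw [le_abs]
        left; linarith
    · exact Or.inl h.2
  have hsub2 : F ⊆ S1 ∪ S2 ∪ D := by
    intro ω hω
    by_cases h1 : gt ω < -γ
    · exact Or.inl (Or.inl h1)
    · by_cases h2 : |gt ω| ≤ γ
      · exact Or.inl (Or.inr ⟨h2, hω⟩)
      · refine Or.inr (habs ω ?_)
        push_neg at h1 h2
        have hgω : g ω < 0 := hω
        have hgtω : γ < gt ω := by
          rcases abs_cases (gt ω) with ⟨he, _⟩ | ⟨he, _⟩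
          · linarith [h2.trans_eq he]
          · have := h2.trans_eq he; linarith
        rw [le_abs]
        right; linarith
  have hdisj : Disjoint S1 S2 := by
    rw [Set.disjoint_left]
    intro ω h1 h2
    have := abs_le.mp h2.1
    have h1' : gt ω < -γ := h1
    linarith [this.1]
  have hS1m : MeasurableSet S1 := hgt measurableSet_Iio
  have hS2m : MeasurableSet S2 :=
    (hgt.abs measurableSet_Iic).inter (hg measurableSet_Iio)
  have hDm : MeasurableSet D := ((Real.continuous_rpow_const hppos.le).measurable.comp (hg.sub hgt).abs) measurableSet_Ici
  have h12 : μ S1 + μ S2 = μ (S1 ∪ S2) := (measure_union hdisj hS2m).symm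
  have hle1 : μ S1 + μ S2 ≤ μ F + μ D := by
    rw [h12]
    exact (measure_mono hsub1).trans (measure_union_le _ _)
  have hle2 : μ F ≤ μ S1 + μ S2 + μ D := by
    rw [h12]
    exact (measure_mono hsub2).trans (measure_union_le _ _)
  have fin : ∀ s : Set Ω, μ s ≠ ⊤ := fun s => measure_ne_top μ s
  have hle1' : (μ S1).toReal + (μ S2).toReal ≤ (μ F).toReal + (μ D).toReal := by
    rw [← ENNReal.toReal_add (fin S1) (fin S2), ← ENNReal.toReal_add (fin F) (fin D)]
    exact ENNReal.toReal_mono (ENNReal.add_ne_top.mpr ⟨fin F, fin D⟩) hle1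
  have hle2' : (μ F).toReal ≤ (μ S1).toReal + (μ S2).toReal + (μ D).toReal := by
    rw [← ENNReal.toReal_add (fin S1) (fin S2),
      ← ENNReal.toReal_add (ENNReal.add_ne_top.mpr ⟨fin S1, fin S2⟩) (fin D)]
    exact ENNReal.toReal_mono (ENNReal.add_ne_top.mpr
      ⟨ENNReal.add_ne_top.mpr ⟨fin S1, fin S2⟩, fin D⟩) hle2
  rw [abs_le]
  constructor <;> linarith
end

section
/- Let (Ω, 𝒜, μ) be a probability space, let g, g̃ : Ω → ℝ be measurable, and let γ ≥ 0 be such that |g(ω) − g̃(ω)| ≤ γ for μ-almost every ω. Then the hybrid estimate is exact: P_γ + Q_γ = P_f. -/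
open MeasureTheory

/-- if `|g − g̃| ≤ γ` μ-almost everywhere, then the hybrid
estimate is exact: `P_γ + Q_γ = P_f`. -/
theorem hybrid_exact_of_ae_close
    {Ω : Type*} [MeasurableSpace Ω] (μ : Measure Ω) [IsProbabilityMeasure μ]
    (g gt : Ω → ℝ) (hg : Measurable g) (hgt : Measurable gt)
    (γ : ℝ) (hγ : 0 ≤ γ)
    (hclose : ∀ᵐ ω ∂μ, |g ω - gt ω| ≤ γ) :
    μ {ω | gt ω < -γ} + μ {ω | |gt ω| ≤ γ ∧ g ω < 0} = μ {ω | g ω < 0} := by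
  have hA : MeasurableSet {ω | gt ω < -γ} := hgt measurableSet_Iio
  have hB : MeasurableSet {ω | |gt ω| ≤ γ ∧ g ω < 0} :=
    ((hgt.abs measurableSet_Iic).inter (hg measurableSet_Iio))
  have hdisj : Disjoint {ω | gt ω < -γ} {ω | |gt ω| ≤ γ ∧ g ω < 0} := by
    rw [Set.disjoint_left]
    rintro ω h1 ⟨h2, _⟩
    have h1' : gt ω < -γ := h1
    have := abs_le.mp h2
    linarith [this.1]
  rw [← measure_union hdisj hB]
  apply measure_congr
  filter_upwards [hclose] with ω hω
  have h := abs_le.mp hω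
  simp only [Set.mem_union, Set.mem_setOf_eq, eq_iff_iff]
  constructor
  · rintro (h1 | ⟨_, h2⟩)
    · have h1' : gt ω < -γ := h1
      show g ω < 0
      linarith [h.2]
    · exact h2
  · intro h1
    have h1' : g ω < 0 := h1
    by_cases h2 : gt ω < -γ
    · exact Or.inl h2
    · push_neg at h2
      exact Or.inr ⟨abs_le.mpr ⟨h2, by linarith [h.2]⟩, h1'⟩
end

section
/- For every natural number n, the Legendre polynomial of odd degree 2n+1, defined by Rodrigues' formula P_{2n+1} = (1/(2^{2n+1} (2n+1)!)) · D^{2n+1}((X² − 1)^{2n+1}), satisfies ∫₀¹ P_{2n+1}(x) dx = (−1)^n (2n)! / (2^{2n+1} · n! · (n+1)!). -/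
open Polynomial intervalIntegral

/-- The Legendre polynomial `P_m` defined by Rodrigues' formula. -/
noncomputable def legendre (m : ℕ) : Polynomial ℝ :=
  Polynomial.C ((1 : ℝ) / (2 ^ m * (Nat.factorial m))) *
    Polynomial.derivative^[m] ((Polynomial.X ^ 2 - 1) ^ m)

lemma integral_eval_derivative (q : Polynomial ℝ) :
    ∫ x in (0:ℝ)..1, (derivative q).eval x = q.eval 1 - q.eval 0 := by
  apply integral_deriv_eq_sub' _ (funext fun x => q.deriv)
  · intro x _; exact q.differentiableAt
  · exact ((derivative q).continuous_aeval).continuousOn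

/-- `∫₀¹ P_{2n+1}(x) dx = (−1)^n (2n)! / (2^{2n+1} n! (n+1)!)`. -/
theorem integral_legendre_odd (n : ℕ) :
    ∫ x in (0 : ℝ)..1, (legendre (2 * n + 1)).eval x
      = (-1 : ℝ) ^ n * (Nat.factorial (2 * n))
          / (2 ^ (2 * n + 1) * (Nat.factorial n) * (Nat.factorial (n + 1))) := by
  set m := 2 * n + 1 with hm
  set p : Polynomial ℝ := (X ^ 2 - 1) ^ m with hp
  set q : Polynomial ℝ := derivative^[2 * n] p with hq
  have hdq : derivative^[m] p = derivative q := Function.iterate_succ_apply' derivative (2 * n) p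
  have h1 : ∫ x in (0:ℝ)..1, (legendre m).eval x
      = (1 / (2 ^ m * (Nat.factorial m)) : ℝ) * (q.eval 1 - q.eval 0) := by
    simp only [legendre, hdq, eval_mul, eval_C]
    rw [← hp, hdq, intervalIntegral.integral_const_mul, integral_eval_derivative]
  have hq1 : q.eval 1 = 0 := by
    obtain ⟨r, hr⟩ := pow_sub_dvd_iterate_derivative_pow (X ^ 2 - 1 : Polynomial ℝ) m (2 * n)
    have h2 : m - 2 * n = 1 := by omega
    rw [h2, pow_one] at hr
    rw [hq, hp, hr]
    simp
  have hpsum : p = ∑ k ∈ Finset.range (m + 1),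
      X ^ (2 * k) * C ((-1 : ℝ) ^ (m - k) * (m.choose k)) := by
    rw [hp, sub_eq_add_neg, add_pow]
    refine Finset.sum_congr rfl fun k _ => ?_
    rw [mul_assoc, ← pow_mul]
    congr 1
    simp only [← C_eq_natCast, ← C_1, ← C_neg, ← C_pow, ← C_mul]
  have hcoeff : p.coeff (2 * n) = (-1 : ℝ) ^ (n + 1) * (m.choose n) := by
    rw [hpsum, finset_sum_coeff]
    rw [Finset.sum_eq_single n]
    · rw [coeff_mul_C, coeff_X_pow, if_pos rfl, one_mul]
      congr 2
      omega
    · intro k _ hk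
      rw [coeff_mul_C, coeff_X_pow, if_neg (by omega), zero_mul]
    · intro h
      exact absurd (Finset.mem_range.mpr (by omega)) h
  have hq0 : q.eval 0 = (Nat.factorial (2 * n) : ℝ) * ((-1:ℝ) ^ (n + 1) * (m.choose n)) := by
    rw [← coeff_zero_eq_eval_zero, hq, coeff_iterate_derivative, zero_add,
      Nat.descFactorial_self, hcoeff, nsmul_eq_mul]
  have key : (m.choose n : ℝ) * n.factorial * (n+1).factorial = m.factorial := by
    have h3 : m.choose n = m.choose (n + 1) := by
      rw [← Nat.choose_symm (by omega : n ≤ m)]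
      congr 1
      omega
    have := Nat.add_choose_mul_factorial_mul_factorial n (n + 1)
    have h2 : n + (n + 1) = m := by omega
    rw [h2] at this
    rw [h3]
    exact_mod_cast this
  have hfact : (Nat.factorial m : ℝ) ≠ 0 := Nat.cast_ne_zero.mpr (Nat.factorial_ne_zero m)
  have hfn : (Nat.factorial n : ℝ) ≠ 0 := Nat.cast_ne_zero.mpr (Nat.factorial_ne_zero n)
  have hfn1 : (Nat.factorial (n+1) : ℝ) ≠ 0 := Nat.cast_ne_zero.mpr (Nat.factorial_ne_zero _)
  have h2 : (2 : ℝ) ^ m ≠ 0 := by positivity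
  have hc : (m.choose n : ℝ) = m.factorial / (n.factorial * (n+1).factorial) := by
    rw [eq_div_iff (mul_ne_zero hfn hfn1), ← key]
    ring
  rw [h1, hq1, hq0, hc, pow_succ]
  field_simp
  ring
end

section
/- Let g : ℝ → ℝ be the step function with g(x) = −1 for x < 0 and g(x) = 0 for x > 0 (the value at 0 is irrelevant), and for each natural number p define the truncated Legendre expansion ĝ^p(x) = −1/2 + Σ_{n=0}^{p} [(−1)^n (4n+3)(2n)! / (2^{2n+2} (n+1)! n!)] · P_{2n+1}(x). Then ĝ^p converges to g in L² on [−1,1]: the integrals ∫_{−1}^{1} (g(x) − ĝ^p(x))² dx tend to 0 as p → ∞. -/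
open Polynomial intervalIntegral Filter

/-- The truncated Legendre expansion `ĝ^p` of the step function. -/
noncomputable def stepExpansion (p : ℕ) (x : ℝ) : ℝ :=
  -1 / 2 + ∑ n ∈ Finset.range (p + 1),
    ((-1 : ℝ) ^ n * (4 * (n : ℝ) + 3) * (Nat.factorial (2 * n))
        / (2 ^ (2 * n + 2) * (Nat.factorial (n + 1)) * (Nat.factorial n)))
      * (legendre (2 * n + 1)).eval x

noncomputable def qp (m : ℕ) : Polynomial ℝ := ((X:Polynomial ℝ)^2 - 1)^m

lemma legendre_def' (m : ℕ) : legendre m = C ((1:ℝ) / (2 ^ m * (Nat.factorial m))) * (⇑derivative)^[m] (qp m) := rfl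

lemma integ_eval (r : Polynomial ℝ) (a b : ℝ) :
    ∫ x in a..b, (derivative r).eval x = r.eval b - r.eval a := by
  have := intervalIntegral.integral_deriv_eq_sub (f := fun x => r.eval x) (a := a) (b := b)
    (fun x _ => (r.hasDerivAt x).differentiableAt) ?_
  · rw [← this]
    apply intervalIntegral.integral_congr
    intro x _
    exact ((r.hasDerivAt x).deriv).symm
  · apply Continuous.intervalIntegrable
    have : (deriv fun x => r.eval x) = fun x => (derivative r).eval x := by
      ext x; exact (r.hasDerivAt x).deriv
    rw [this]; exact (derivative r).continuous

lemma dvd_deriv (r : Polynomial ℝ) (e : ℝ) (j : ℕ) (h : (X - C e)^(j+1) ∣ r) :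
    (X - C e)^j ∣ derivative r := by
  obtain ⟨u, rfl⟩ := h
  rw [derivative_mul, derivative_pow]
  refine ⟨C (j+1:ℝ) * derivative (X - C e) * u + (X - C e) * derivative u, ?_⟩
  push_cast
  ring

lemma dvd_iter (m k : ℕ) (e : ℝ) (he : e^2 = 1) (hk : k ≤ m) :
    (X - C e)^(m - k) ∣ (⇑derivative)^[k] (qp m) := by
  induction k with
  | zero =>
    simp only [Function.iterate_zero, id_eq, Nat.sub_zero, qp]
    have h2 : (X:Polynomial ℝ)^2 - 1 = (X - C e) * (X + C e) := by
      have h1 : (C e : Polynomial ℝ) * C e = 1 := by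
        rw [← C_mul, ← sq, he, C_1]
      ring_nf
      rw [← h1]; ring
    rw [h2, mul_pow]
    exact dvd_mul_right _ _
  | succ k ih =>
    rw [Function.iterate_succ_apply']
    have h1 : m - k = (m - (k+1)) + 1 := by omega
    apply dvd_deriv
    rw [← h1]
    exact ih (by omega)

lemma eval_iter_zero (m k : ℕ) (hk : k < m) (e : ℝ) (he : e^2 = 1) :
    ((⇑derivative)^[k] (qp m)).eval e = 0 := by
  obtain ⟨u, hu⟩ := dvd_iter m k e he hk.le
  rw [hu, eval_mul, eval_pow, eval_sub, eval_X, eval_C, sub_self,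
    zero_pow (by omega), zero_mul]

lemma pint (r : Polynomial ℝ) (a b : ℝ) : IntervalIntegrable (fun x => r.eval x) MeasureTheory.volume a b :=
  r.continuous.intervalIntegrable a b


lemma parts (u v : Polynomial ℝ) (h1 : v.eval 1 = 0) (h2 : v.eval (-1) = 0) :
    ∫ x in (-1:ℝ)..1, (u * derivative v).eval x
      = - ∫ x in (-1:ℝ)..1, (derivative u * v).eval x := by
  have key : ∫ x in (-1:ℝ)..1, (derivative (u*v)).eval x = 0 := by
    rw [integ_eval, eval_mul, eval_mul, h1, h2]; ring
  rw [derivative_mul] at key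
  have split : ∫ x in (-1:ℝ)..1, (derivative u * v + u * derivative v).eval x
      = (∫ x in (-1:ℝ)..1, (derivative u * v).eval x)
        + ∫ x in (-1:ℝ)..1, (u * derivative v).eval x := by
    rw [← intervalIntegral.integral_add (pint _ _ _) (pint _ _ _)]
    simp
  rw [split] at key
  linarith

lemma parts_iter (u : Polynomial ℝ) (m : ℕ) : ∀ j, j ≤ m →
    ∫ x in (-1:ℝ)..1, (u * (⇑derivative)^[m] (qp m)).eval x
      = (-1:ℝ)^j * ∫ x in (-1:ℝ)..1, ((⇑derivative)^[j] u * (⇑derivative)^[m-j] (qp m)).eval x := by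
  intro j
  induction j with
  | zero => intro _; simp
  | succ j ih =>
    intro hj
    rw [ih (by omega)]
    have hm : m - j = (m - (j+1)) + 1 := by omega
    have h2 : (⇑derivative)^[m-j] (qp m) = derivative ((⇑derivative)^[m-(j+1)] (qp m)) := by
      rw [hm, Function.iterate_succ_apply']
    rw [h2, parts _ _ (eval_iter_zero m _ (by omega) 1 (by norm_num))
        (eval_iter_zero m _ (by omega) (-1) (by norm_num)),
      ← Function.iterate_succ_apply' derivative]
    push_cast [pow_succ]
    ring

lemma qp_eval_one (m : ℕ) (hm : 0 < m) (e : ℝ) (he : e^2 = 1) : (qp m).eval e = 0 := by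
  simp [qp, he, sub_self, zero_pow hm.ne']

lemma key_identity (n : ℕ) :
    derivative (X * qp (n+1)) = C (2*(n:ℝ)+3) * qp (n+1) + C (2*(n:ℝ)+2) * qp n := by
  simp only [qp, derivative_mul, derivative_X, derivative_pow, derivative_sub,
    derivative_one, derivative_X_pow, one_mul]
  push_cast
  simp only [C_add, C_mul, C_1, map_ofNat, map_natCast]
  ring

lemma Jval (n : ℕ) : ∫ x in (-1:ℝ)..1, (qp n).eval x
    = (-1:ℝ)^n * 2^(2*n+1) * (Nat.factorial n)^2 / (Nat.factorial (2*n+1)) := by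
  induction n with
  | zero =>
    norm_num [qp, Nat.factorial]
  | succ n ih =>
    have h0 : ∫ x in (-1:ℝ)..1, (derivative (X * qp (n+1))).eval x = 0 := by
      rw [integ_eval]
      simp [qp_eval_one (n+1) (by omega) 1 (by norm_num),
        qp_eval_one (n+1) (by omega) (-1) (by norm_num)]
    rw [key_identity] at h0
    have hsplit : ∫ x in (-1:ℝ)..1, (C (2*(n:ℝ)+3) * qp (n+1) + C (2*(n:ℝ)+2) * qp n).eval x
        = (2*(n:ℝ)+3) * (∫ x in (-1:ℝ)..1, (qp (n+1)).eval x)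
          + (2*(n:ℝ)+2) * ∫ x in (-1:ℝ)..1, (qp n).eval x := by
      rw [← intervalIntegral.integral_const_mul, ← intervalIntegral.integral_const_mul,
        ← intervalIntegral.integral_add ((pint _ _ _).const_mul _) ((pint _ _ _).const_mul _)]
      simp
    rw [hsplit, ih] at h0
    have h1 : (∫ x in (-1:ℝ)..1, (qp (n+1)).eval x)
        = -(2*(n:ℝ)+2) / (2*(n:ℝ)+3) * ((-1:ℝ)^n * 2^(2*n+1) * (Nat.factorial n)^2 / (Nat.factorial (2*n+1))) := by
      have : (2*(n:ℝ)+3) ≠ 0 := by positivity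
      field_simp at h0 ⊢
      linarith
    rw [h1]
    have e1 : Nat.factorial (2*(n+1)+1) = (2*n+3) * ((2*n+2) * Nat.factorial (2*n+1)) := by
      have : 2*(n+1)+1 = (2*n+1)+1+1 := by omega
      rw [this, Nat.factorial_succ, Nat.factorial_succ]
    have e2 : Nat.factorial (n+1) = (n+1) * Nat.factorial n := Nat.factorial_succ n
    rw [e1, e2]
    have hf1 : (Nat.factorial (2*n+1) : ℝ) ≠ 0 := Nat.cast_ne_zero.2 (Nat.factorial_ne_zero _)
    have hf2 : (Nat.factorial n : ℝ) ≠ 0 := Nat.cast_ne_zero.2 (Nat.factorial_ne_zero _)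
    push_cast
    field_simp
    ring

lemma qp_natDegree (m : ℕ) : (qp m).natDegree = 2 * m := by
  have h : ((X:Polynomial ℝ)^2 - 1) = X^2 - C 1 := by simp
  rw [qp, h, Monic.natDegree_pow (monic_X_pow_sub_C 1 (by norm_num)), natDegree_X_pow_sub_C]
  ring

lemma qp_monic (m : ℕ) : (qp m).Monic := by
  have h : ((X:Polynomial ℝ)^2 - 1) = X^2 - C 1 := by simp
  rw [qp, h]
  exact (monic_X_pow_sub_C (1:ℝ) (by norm_num : (2:ℕ) ≠ 0)).pow m

lemma qp_coeff_top (m : ℕ) : (qp m).coeff (2*m) = 1 := by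
  have h := (qp_monic m).coeff_natDegree
  rwa [qp_natDegree] at h

lemma legendre_natDegree (m : ℕ) : (legendre m).natDegree ≤ m := by
  refine le_trans (natDegree_C_mul_le _ _) ?_
  refine le_trans (natDegree_iterate_derivative _ _) ?_
  rw [show ((X:Polynomial ℝ)^2-1)^m = qp m from rfl, qp_natDegree]
  omega


lemma ortho (u : Polynomial ℝ) (n : ℕ) (h : u.natDegree < n) :
    ∫ x in (-1:ℝ)..1, (u * legendre n).eval x = 0 := by
  have h1 : u * legendre n = C ((1:ℝ) / (2 ^ n * (Nat.factorial n))) * (u * (⇑derivative)^[n] (qp n)) := by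
    rw [legendre_def']; ring
  have h2 : ∀ x:ℝ, (u * legendre n).eval x
      = ((1:ℝ) / (2 ^ n * (Nat.factorial n))) * (u * (⇑derivative)^[n] (qp n)).eval x := by
    intro x; rw [h1]; simp
  simp_rw [h2]
  rw [intervalIntegral.integral_const_mul, parts_iter u n n le_rfl,
    iterate_derivative_eq_zero h]
  simp


lemma iter2n (n : ℕ) : (⇑derivative)^[2*n] (qp n) = C ((Nat.factorial (2*n)) : ℝ) := by
  have hdeg : ((⇑derivative)^[2*n] (qp n)).natDegree ≤ 0 := by
    refine le_trans (natDegree_iterate_derivative _ _) ?_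
    rw [qp_natDegree]
    omega
  have h1 := Polynomial.eq_C_of_natDegree_le_zero hdeg
  rw [h1, coeff_iterate_derivative, zero_add, Nat.descFactorial_self, qp_coeff_top]
  simp

lemma legendre_sq_integral (n : ℕ) :
    ∫ x in (-1:ℝ)..1, (legendre n * legendre n).eval x = 2 / (2*(n:ℝ)+1) := by
  set c : ℝ := (1:ℝ) / (2 ^ n * (Nat.factorial n)) with hc
  have h2 : ∀ x:ℝ, (legendre n * legendre n).eval x
      = c * ((legendre n) * (⇑derivative)^[n] (qp n)).eval x := by
    intro x; rw [legendre_def']; simp [hc]; ring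
  simp_rw [h2]
  rw [intervalIntegral.integral_const_mul, parts_iter (legendre n) n n le_rfl]
  have h3 : (⇑derivative)^[n] (legendre n) = C (c * (Nat.factorial (2*n))) := by
    rw [legendre_def', iterate_derivative_C_mul, ← hc,
      ← Function.iterate_add_apply, show n + n = 2*n by ring, iter2n, ← C_mul]
  rw [h3, Nat.sub_self]
  simp only [Function.iterate_zero, id_eq]
  have h4 : ∀ x:ℝ, (C (c * (Nat.factorial (2*n))) * qp n).eval x
      = (c * (Nat.factorial (2*n))) * (qp n).eval x := by intro x; simp
  simp_rw [h4]
  rw [intervalIntegral.integral_const_mul, Jval]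
  have e1 : (Nat.factorial (2*n+1) : ℝ) = (2*n+1) * Nat.factorial (2*n) := by
    rw [Nat.factorial_succ]; push_cast; ring
  have hf1 : (Nat.factorial (2*n) : ℝ) ≠ 0 := Nat.cast_ne_zero.2 (Nat.factorial_ne_zero _)
  have hf2 : (Nat.factorial n : ℝ) ≠ 0 := Nat.cast_ne_zero.2 (Nat.factorial_ne_zero _)
  have hp : (2:ℝ)^n ≠ 0 := by positivity
  have h2n1 : (2*(n:ℝ)+1) ≠ 0 := by positivity
  have hs : (-1:ℝ)^n * (-1:ℝ)^n = 1 := by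
    rw [← pow_add, ← two_mul, pow_mul]; norm_num
  have hpow : (2:ℝ)^(2*n+1) = 2 * (2^n * 2^n) := by
    rw [← pow_add]; ring_nf
  rw [hc, e1]
  field_simp
  linear_combination (2:ℝ)^(2*n+1) * hs + hpow

lemma qp_coeff_mid (n : ℕ) : (qp (2*n+1)).coeff (2*n)
    = (-1:ℝ)^(n+1) * ((2*n+1).choose n) := by
  rw [qp, sub_pow]
  rw [finset_sum_coeff]
  rw [Finset.sum_eq_single n]
  · have : ((X:Polynomial ℝ)^2)^n = X^(2*n) := by rw [← pow_mul]
    rw [this]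
    simp only [one_pow, mul_one]
    rw [show ((-1:Polynomial ℝ)^(n+(2*n+1)) * X^(2*n) * ((2*n+1).choose n : Polynomial ℝ))
        = C ((-1:ℝ)^(n+(2*n+1)) * ((2*n+1).choose n : ℝ)) * X^(2*n) from ?_]
    · rw [coeff_C_mul, coeff_X_pow, if_pos rfl, mul_one]
      congr 1
      have : n+(2*n+1) = (n+1) + 2*n := by omega
      rw [this, pow_add, pow_mul]
      norm_num
    · rw [map_mul, map_pow, map_neg, C_1, map_natCast]
      ring
  · intro b hb hbn
    have h1 : ((X:Polynomial ℝ)^2)^b = X^(2*b) := by rw [← pow_mul]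
    rw [h1]
    simp only [one_pow, mul_one]
    rw [show ((-1:Polynomial ℝ)^(b+(2*n+1)) * X^(2*b) * ((2*n+1).choose b : Polynomial ℝ))
        = C ((-1:ℝ)^(b+(2*n+1)) * ((2*n+1).choose b : ℝ)) * X^(2*b) from ?_]
    · rw [coeff_C_mul, coeff_X_pow, if_neg (by omega), mul_zero]
    · rw [map_mul, map_pow, map_neg, C_1, map_natCast]
      ring
  · intro h
    exact absurd (Finset.mem_range.2 (by omega)) h

lemma legendre_odd_integral (n : ℕ) :
    ∫ x in (-1:ℝ)..0, (legendre (2*n+1)).eval x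
      = (-1:ℝ)^(n+1) * (Nat.factorial (2*n))
        / (2^(2*n+1) * Nat.factorial n * Nat.factorial (n+1)) := by
  set c : ℝ := (1:ℝ) / (2 ^ (2*n+1) * (Nat.factorial (2*n+1))) with hc
  have h1 : ∀ x:ℝ, (legendre (2*n+1)).eval x
      = c * (derivative ((⇑derivative)^[2*n] (qp (2*n+1)))).eval x := by
    intro x
    rw [legendre_def', ← Function.iterate_succ_apply' derivative]
    simp [hc]
  simp_rw [h1]
  rw [intervalIntegral.integral_const_mul, integ_eval,
    eval_iter_zero (2*n+1) (2*n) (by omega) (-1) (by norm_num), sub_zero]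
  have h2 : ((⇑derivative)^[2*n] (qp (2*n+1))).eval 0
      = (Nat.factorial (2*n) : ℝ) * ((-1:ℝ)^(n+1) * ((2*n+1).choose n)) := by
    rw [← coeff_zero_eq_eval_zero, coeff_iterate_derivative, zero_add,
      Nat.descFactorial_self, qp_coeff_mid, nsmul_eq_mul]
  rw [h2]
  have h5 : (2*n+1).choose n * Nat.factorial n * Nat.factorial (n+1) = Nat.factorial (2*n+1) := by
    have h := Nat.choose_mul_factorial_mul_factorial (show n ≤ 2*n+1 by omega)
    rwa [show 2*n+1-n = n+1 by omega] at h
  have hch : (((2*n+1).choose n : ℝ) * Nat.factorial n * Nat.factorial (n+1) : ℝ)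
      = Nat.factorial (2*n+1) := by exact_mod_cast congrArg (Nat.cast (R := ℝ)) h5
  have hf1 : (Nat.factorial (2*n+1) : ℝ) ≠ 0 := Nat.cast_ne_zero.2 (Nat.factorial_ne_zero _)
  have hf2 : (Nat.factorial n : ℝ) ≠ 0 := Nat.cast_ne_zero.2 (Nat.factorial_ne_zero _)
  have hf3 : (Nat.factorial (n+1) : ℝ) ≠ 0 := Nat.cast_ne_zero.2 (Nat.factorial_ne_zero _)
  have hp : (2:ℝ)^(2*n+1) ≠ 0 := by positivity
  rw [hc]
  field_simp
  linear_combination hch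

noncomputable def aC (n : ℕ) : ℝ :=
  (-1 : ℝ) ^ n * (4 * (n : ℝ) + 3) * (Nat.factorial (2 * n))
    / (2 ^ (2 * n + 2) * (Nat.factorial (n + 1)) * (Nat.factorial n))

noncomputable def GP (p : ℕ) : Polynomial ℝ :=
  C (-1/2 : ℝ) + ∑ n ∈ Finset.range (p+1), C (aC n) * legendre (2*n+1)

noncomputable def tC (n : ℕ) : ℝ := (aC n)^2 * (2 / (4*(n:ℝ)+3))

noncomputable def bC (k : ℕ) : ℝ := (Nat.factorial (2*k)) / (4^k * (Nat.factorial k)^2)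

lemma step_eval (p : ℕ) (x : ℝ) : stepExpansion p x = (GP p).eval x := by
  simp [stepExpansion, GP, eval_finset_sum, aC]

lemma GP_natDegree (p : ℕ) : (GP p).natDegree ≤ 2*p+1 := by
  refine le_trans (natDegree_add_le _ _) ?_
  rw [natDegree_C]
  refine max_le (by omega) (natDegree_sum_le_of_forall_le _ _ (fun n hn => ?_))
  refine le_trans (natDegree_C_mul_le _ _) (le_trans (legendre_natDegree _) ?_)
  have := Finset.mem_range.1 hn
  omega

lemma pcont (r : Polynomial ℝ) : Continuous (fun x => r.eval x) := r.continuous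

lemma Mval (p : ℕ) : ∫ x in (-1:ℝ)..0, (GP p).eval x
    = -1/2 - ∑ n ∈ Finset.range (p+1), tC n := by
  have h1 : ∀ x:ℝ, (GP p).eval x
      = -1/2 + ∑ n ∈ Finset.range (p+1), aC n * (legendre (2*n+1)).eval x := by
    intro x; simp [GP, eval_finset_sum]
  simp_rw [h1]
  have hcont : Continuous (fun x => ∑ n ∈ Finset.range (p+1), aC n * (legendre (2*n+1)).eval x) :=
    continuous_finset_sum _ (fun i _ => continuous_const.mul (pcont (legendre (2*i+1))))
  rw [intervalIntegral.integral_add (intervalIntegrable_const) (hcont.intervalIntegrable _ _),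
    intervalIntegral.integral_finset_sum (fun n _ => (continuous_const.fun_mul (pcont (legendre (2*n+1)))).intervalIntegrable _ _)]
  simp_rw [intervalIntegral.integral_const_mul, legendre_odd_integral]
  rw [intervalIntegral.integral_const]
  have h2 : ∀ n : ℕ, aC n * ((-1:ℝ)^(n+1) * (Nat.factorial (2*n))
      / (2^(2*n+1) * Nat.factorial n * Nat.factorial (n+1))) = -tC n := by
    intro n
    have hf2 : (Nat.factorial n : ℝ) ≠ 0 := Nat.cast_ne_zero.2 (Nat.factorial_ne_zero _)
    have hf3 : (Nat.factorial (n+1) : ℝ) ≠ 0 := Nat.cast_ne_zero.2 (Nat.factorial_ne_zero _)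
    have hss : (-1:ℝ)^n * (-1:ℝ)^n = 1 := by
      rw [← pow_add, ← two_mul, pow_mul]; norm_num
    have h43 : (4*(n:ℝ)+3) ≠ 0 := by positivity
    have hq : (2:ℝ)^(2*n+2) = 2 * 2^(2*n+1) := by rw [pow_succ]; ring
    rw [aC, tC, aC, hq, pow_succ]
    field_simp
    linear_combination 0 * hss
  simp_rw [h2]
  rw [Finset.sum_neg_distrib]
  simp [smul_eq_mul]
  ring

lemma Nval (p : ℕ) : ∫ x in (-1:ℝ)..1, ((GP p).eval x)^2
    = 1/2 + ∑ n ∈ Finset.range (p+1), tC n := by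
  induction p with
  | zero =>
    have hG0 : ∀ x:ℝ, (GP 0).eval x = -1/2 + aC 0 * (legendre 1).eval x := by
      intro x; simp [GP, eval_finset_sum]
    have hx : ∀ x:ℝ, ((GP 0).eval x)^2
        = 1/4 + (- aC 0) * ((1:Polynomial ℝ) * legendre 1).eval x
          + (aC 0)^2 * (legendre 1 * legendre 1).eval x := by
      intro x; rw [hG0]; simp [eval_mul]; ring
    simp_rw [hx]
    rw [intervalIntegral.integral_add
        (((continuous_const.fun_add (continuous_const.fun_mul (pcont _))).intervalIntegrable _ _ : _))
        ((continuous_const.fun_mul (pcont _)).intervalIntegrable _ _)]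
    rw [intervalIntegral.integral_add (intervalIntegrable_const)
        ((continuous_const.fun_mul (pcont _)).intervalIntegrable _ _)]
    rw [intervalIntegral.integral_const_mul, intervalIntegral.integral_const_mul,
      ortho 1 1 (by simp), legendre_sq_integral 1, intervalIntegral.integral_const]
    rw [Finset.sum_range_one]
    have : tC 0 = (aC 0)^2 * (2/3) := by rw [tC]; norm_num
    rw [this]
    simp [smul_eq_mul]
    ring
  | succ p ih =>
    have hsplit : GP (p+1) = GP p + C (aC (p+1)) * legendre (2*(p+1)+1) := by
      rw [GP, GP, Finset.sum_range_succ]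
      ring
    have hx : ∀ x:ℝ, ((GP (p+1)).eval x)^2
        = ((GP p).eval x)^2
          + ((2 * aC (p+1)) * ((GP p) * legendre (2*(p+1)+1)).eval x
            + (aC (p+1))^2 * (legendre (2*(p+1)+1) * legendre (2*(p+1)+1)).eval x) := by
      intro x; rw [hsplit]; simp [eval_mul]; ring
    simp_rw [hx]
    rw [intervalIntegral.integral_add
        (((pcont (GP p)).fun_pow 2).intervalIntegrable _ _)
        (((continuous_const.fun_mul (pcont _)).fun_add
          (continuous_const.fun_mul (pcont _))).intervalIntegrable _ _)]
    rw [intervalIntegral.integral_add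
        ((continuous_const.fun_mul (pcont _)).intervalIntegrable _ _)
        ((continuous_const.fun_mul (pcont _)).intervalIntegrable _ _)]
    rw [intervalIntegral.integral_const_mul, intervalIntegral.integral_const_mul]
    rw [ortho (GP p) (2*(p+1)+1) (by have := GP_natDegree p; omega),
      legendre_sq_integral (2*(p+1)+1)]
    have hpow : ∀ x : ℝ, ((GP p).eval x)^2 = ((GP p).eval x)^2 := fun _ => rfl
    rw [ih]
    have htc : tC (p+1) = (aC (p+1))^2 * (2 / (2*((2*(p+1)+1 : ℕ):ℝ)+1)) := by
      rw [tC]; push_cast; ring_nf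
    rw [← htc, Finset.sum_range_succ tC (p+1)]
    ring

lemma tC_telescope (n : ℕ) : tC n = (bC n)^2/2 - (bC (n+1))^2/2 := by
  have hf1 : (Nat.factorial n : ℝ) ≠ 0 := Nat.cast_ne_zero.2 (Nat.factorial_ne_zero _)
  have hf2 : (Nat.factorial (2*n) : ℝ) ≠ 0 := Nat.cast_ne_zero.2 (Nat.factorial_ne_zero _)
  have h43 : (4*(n:ℝ)+3) ≠ 0 := by positivity
  have e1 : (Nat.factorial (2*(n+1)) : ℝ) = (2*n+2) * ((2*n+1) * Nat.factorial (2*n)) := by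
    have : 2*(n+1) = (2*n+1)+1 := by omega
    rw [this, Nat.factorial_succ, Nat.factorial_succ]
    push_cast; ring
  have e2 : (Nat.factorial (n+1) : ℝ) = (n+1) * Nat.factorial n := by
    rw [Nat.factorial_succ]; push_cast; ring
  have e3 : (4:ℝ)^(n+1) = 4 * 4^n := by rw [pow_succ]; ring
  have e4 : (2:ℝ)^(2*n+2) = 4 * 4^n := by
    rw [show 2*n+2 = 2*(n+1) by ring, pow_mul]; norm_num [e3, pow_mul]
  have hss : (-1:ℝ)^n * (-1:ℝ)^n = 1 := by
    rw [← pow_add, ← two_mul, pow_mul]; norm_num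
  rw [tC, aC, bC, bC, e1, e2, e3, e4]
  have h4n : (4:ℝ)^n ≠ 0 := by positivity
  have hneg : ((-1:ℝ))^(n*2) = 1 := Even.neg_one_pow ⟨n, by ring⟩
  field_simp
  ring_nf
  simp only [hneg, one_mul, mul_one]
  ring

lemma sum_tC (p : ℕ) : ∑ n ∈ Finset.range (p+1), tC n = 1/2 - (bC (p+1))^2/2 := by
  have h := Finset.sum_range_sub' (fun n => (bC n)^2/2) (p+1)
  simp_rw [← tC_telescope] at h
  rw [h, bC]
  norm_num [Nat.factorial]

lemma bC_nonneg (k : ℕ) : 0 ≤ bC k := by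
  rw [bC]; positivity

lemma bC_sq_le (k : ℕ) : (bC k)^2 ≤ 1/(2*(k:ℝ)+1) := by
  induction k with
  | zero => rw [bC]; norm_num [Nat.factorial]
  | succ k ih =>
    have hrec : bC (k+1) * (2*(k:ℝ)+2) = bC k * (2*(k:ℝ)+1) := by
      have hf1 : (Nat.factorial k : ℝ) ≠ 0 := Nat.cast_ne_zero.2 (Nat.factorial_ne_zero _)
      have e1 : (Nat.factorial (2*(k+1)) : ℝ) = (2*k+2) * ((2*k+1) * Nat.factorial (2*k)) := by
        have : 2*(k+1) = (2*k+1)+1 := by omega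
        rw [this, Nat.factorial_succ, Nat.factorial_succ]
        push_cast; ring
      have e2 : (Nat.factorial (k+1) : ℝ) = (k+1) * Nat.factorial k := by
        rw [Nat.factorial_succ]; push_cast; ring
      have e3 : (4:ℝ)^(k+1) = 4 * 4^k := by rw [pow_succ]; ring
      have h4n : (4:ℝ)^k ≠ 0 := by positivity
      rw [bC, bC, e1, e2, e3]
      field_simp
      ring
    have h22 : (0:ℝ) < 2*(k:ℝ)+2 := by positivity
    have hb : bC (k+1) = bC k * (2*(k:ℝ)+1) / (2*(k:ℝ)+2) := by
      field_simp
      linarith [hrec]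
    have h21 : (0:ℝ) < 2*(k:ℝ)+1 := by positivity
    have hkk : (bC k)^2 * (2*(k:ℝ)+1) ≤ 1 := by
      calc (bC k)^2 * (2*(k:ℝ)+1) ≤ (1/(2*(k:ℝ)+1)) * (2*(k:ℝ)+1) :=
            mul_le_mul_of_nonneg_right ih h21.le
        _ = 1 := by field_simp
    rw [hb, div_pow, mul_pow, div_le_div_iff₀ (by positivity) (by positivity)]
    push_cast
    nlinarith [mul_le_mul_of_nonneg_right hkk
      (show (0:ℝ) ≤ (2*(k:ℝ)+1)*(2*((k:ℝ)+1)+1) by positivity)]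

lemma main_E (g : ℝ → ℝ) (hneg : ∀ x, x < 0 → g x = -1) (hpos : ∀ x, 0 < x → g x = 0)
    (p : ℕ) :
    ∫ x in (-1:ℝ)..1, (g x - stepExpansion p x) ^ 2 = (bC (p+1))^2 / 2 := by
  set e : ℝ → ℝ := fun x => (GP p).eval x with he
  set F : ℝ → ℝ := fun x => if x < 0 then (1 + e x)^2 else (e x)^2 with hF
  have h0 : ∀ᵐ (x:ℝ) ∂MeasureTheory.volume, x ≠ 0 := by
    rw [MeasureTheory.ae_iff]
    convert Real.volume_singleton (a := 0) using 2
    ext x; simp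
  -- step A
  have stepA : ∫ x in (-1:ℝ)..1, (g x - stepExpansion p x) ^ 2 = ∫ x in (-1:ℝ)..1, F x := by
    apply intervalIntegral.integral_congr_ae
    filter_upwards [h0] with x hx _
    rw [step_eval]
    rcases lt_or_gt_of_ne hx with h | h
    · rw [hneg x h, hF]; simp only [if_pos h, he]; ring
    · rw [hpos x h, hF]; simp only [if_neg (not_lt.2 h.le), he]; ring
  -- integrability of F on pieces
  have hFleft : IntervalIntegrable F MeasureTheory.volume (-1) 0 := by
    have hc1 : Continuous (fun x : ℝ => ((1:ℝ) + (GP p).eval x)^2) :=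
      (continuous_const.add (pcont (GP p))).pow 2
    apply IntervalIntegrable.congr_ae (hc1.intervalIntegrable (-1) 0)
    have hmem := MeasureTheory.ae_restrict_mem (μ := MeasureTheory.volume) (measurableSet_Ioc (a := min (-1:ℝ) 0) (b := max (-1:ℝ) 0))
    filter_upwards [MeasureTheory.ae_restrict_of_ae h0, hmem] with x hx hmemx
    have hlt : x < 0 := by
      rcases hmemx with ⟨_, h2⟩
      simp only [max_eq_right (by norm_num : (-1:ℝ) ≤ 0)] at h2
      exact lt_of_le_of_ne h2 hx
    rw [hF]; simp only [if_pos hlt, he]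
  have hFright : IntervalIntegrable F MeasureTheory.volume 0 1 := by
    apply IntervalIntegrable.congr_ae (((pcont (GP p)).fun_pow 2).intervalIntegrable 0 1)
    have hmem := MeasureTheory.ae_restrict_mem (μ := MeasureTheory.volume) (measurableSet_Ioc (a := min (0:ℝ) 1) (b := max (0:ℝ) 1))
    filter_upwards [hmem] with x hmemx
    have hgt : 0 < x := by
      rcases hmemx with ⟨h1, _⟩
      simpa [min_eq_left (by norm_num : (0:ℝ) ≤ 1)] using h1
    rw [hF]; simp only [if_neg (not_lt.2 hgt.le), he]
  -- split
  have stepC : ∫ x in (-1:ℝ)..1, F x = (∫ x in (-1:ℝ)..0, F x) + ∫ x in (0:ℝ)..1, F x :=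
    (intervalIntegral.integral_add_adjacent_intervals hFleft hFright).symm
  -- left piece
  have stepD : ∫ x in (-1:ℝ)..0, F x = ∫ x in (-1:ℝ)..0, (1 + e x)^2 := by
    apply intervalIntegral.integral_congr_ae
    filter_upwards [h0] with x hx hmemx
    have hlt : x < 0 := by
      rw [Set.uIoc_of_le (by norm_num : (-1:ℝ) ≤ 0)] at hmemx
      exact lt_of_le_of_ne hmemx.2 hx
    rw [hF]; simp only [if_pos hlt]
  -- right piece
  have stepE : ∫ x in (0:ℝ)..1, F x = ∫ x in (0:ℝ)..1, (e x)^2 := by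
    apply intervalIntegral.integral_congr
    intro x hx
    rw [Set.uIcc_of_le (by norm_num : (0:ℝ) ≤ 1)] at hx
    rw [hF]; simp only [if_neg (not_lt.2 hx.1)]
  -- expand left
  have expand : ∀ x:ℝ, (1 + e x)^2 = 1 + 2 * e x + (e x)^2 := fun x => by ring
  have stepF : ∫ x in (-1:ℝ)..0, (1 + e x)^2
      = 1 + 2 * (∫ x in (-1:ℝ)..0, e x) + ∫ x in (-1:ℝ)..0, (e x)^2 := by
    simp_rw [expand]
    rw [intervalIntegral.integral_add
        ((continuous_const.fun_add (continuous_const.fun_mul (pcont (GP p)))).intervalIntegrable _ _)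
        (((pcont (GP p)).fun_pow 2).intervalIntegrable _ _),
      intervalIntegral.integral_add (intervalIntegrable_const)
        ((continuous_const.fun_mul (pcont (GP p))).intervalIntegrable _ _),
      intervalIntegral.integral_const_mul, intervalIntegral.integral_const]
    norm_num
    rfl
  -- combine the two squares
  have stepG : (∫ x in (-1:ℝ)..0, (e x)^2) + (∫ x in (0:ℝ)..1, (e x)^2)
      = ∫ x in (-1:ℝ)..1, (e x)^2 :=
    intervalIntegral.integral_add_adjacent_intervals
      (((pcont (GP p)).pow 2).intervalIntegrable _ _)
      (((pcont (GP p)).pow 2).intervalIntegrable _ _)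
  rw [stepA, stepC, stepD, stepE, stepF]
  have : 1 + 2 * (∫ x in (-1:ℝ)..0, e x) + (∫ x in (-1:ℝ)..0, (e x)^2)
      + (∫ x in (0:ℝ)..1, (e x)^2)
      = 1 + 2 * (∫ x in (-1:ℝ)..0, e x) + ∫ x in (-1:ℝ)..1, (e x)^2 := by
    rw [← stepG]; ring
  rw [this, he]
  show (1:ℝ) + 2 * (∫ x in (-1:ℝ)..0, (GP p).eval x) + (∫ x in (-1:ℝ)..1, ((GP p).eval x)^2) = _
  rw [Mval, Nval, sum_tC]
  ring

/-- the truncated Legendre expansions of the step function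
(`g = −1` on `[−1,0)`, `g = 0` on `(0,1]`, value at `0` irrelevant) converge
to it in `L²` on `[−1, 1]`. -/
theorem stepExpansion_tendsto_L2
    (g : ℝ → ℝ) (hneg : ∀ x, x < 0 → g x = -1) (hpos : ∀ x, 0 < x → g x = 0) :
    Tendsto (fun p => ∫ x in (-1 : ℝ)..1, (g x - stepExpansion p x) ^ 2)
      atTop (nhds 0) := by
  have hfun : (fun p => ∫ x in (-1 : ℝ)..1, (g x - stepExpansion p x) ^ 2)
      = fun p => (bC (p+1))^2 / 2 := funext (main_E g hneg hpos)
  rw [hfun]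
  apply squeeze_zero (fun p => by positivity)
    (g := fun p : ℕ => 1 / ((p:ℝ) + 1))
  · intro p
    have h1 := bC_sq_le (p+1)
    have h2 : (1:ℝ)/(2*((p:ℝ)+1)+1) / 2 ≤ 1/((p:ℝ)+1) := by
      rw [div_div, div_le_div_iff₀ (by positivity) (by positivity)]
      nlinarith [Nat.cast_nonneg (α := ℝ) p]
    calc (bC (p+1))^2/2 ≤ (1/(2*((p+1:ℕ):ℝ)+1))/2 := by linarith [bC_sq_le (p+1)]
      _ ≤ 1/((p:ℝ)+1) := by push_cast; exact h2
  · exact tendsto_one_div_add_atTop_nhds_zero_nat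
end
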